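/- Let A be a complex unital Banach algebra, let a, δa ∈ A, let p, q ∈ A be idempotents, and suppose b ∈ A satisfies b·a·b = b, R_r(b) = R_r(p) and K_r(b) = R_r(q) (i.e., b = a^{(2,l)}_{p,q}). Set κ = ‖a‖·‖b‖ and ā = a + δa. Let p′, q′ ∈ A be idempotents with ‖p − p′‖ < 1/(κ + 1)², ‖q − q′‖ < 1/(κ + 3), and assume ‖b‖·‖δa‖ < 2κ/((κ + 1)·(κ + 4)). Then there exists c ∈ A with c·ā·c = c, R_r(c) = R_r(p′) and K_r(c) = R_r(q′) (i.e., ā^{(2,l)}_{p′,q′} exists), and it satisfies ‖c‖ ≤ (1 + ‖q − q′‖)·‖b‖ / (1 − (1 + κ)·‖p − p′‖ − κ·‖q − q′‖ − (1 + ‖q − q′‖)·‖b‖·‖δa‖) and ‖c − b‖ ≤ [‖b‖ / (1 − (1 + κ)·‖p − p′‖ − κ·‖q − q′‖)] · [ (1 + κ)·(‖p − p′‖ + ‖q − q′‖) + (1 + ‖q − q′‖)²·‖δa‖·‖b‖ / (1 − (1 + κ)·‖p − p′‖ − κ·‖q − q′‖ − (1 + ‖q − q′‖)·‖b‖·‖δa‖)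 ]. -/

import Mathlib

/-- Right range `R_r(a) = {a·x : x ∈ A}`. -/
def Rr {A : Type*} [Ring A] (a : A) : Set A := {y | ∃ x, y = a * x}

/-- Right kernel `K_r(a) = {x ∈ A : a·x = 0}`. -/
def Kr {A : Type*} [Ring A] (a : A) : Set A := {x | a * x = 0}

/-- Left range `R_l(a) = {x·a : x ∈ A}`. -/
def Rl {A : Type*} [Ring A] (a : A) : Set A := {y | ∃ x, y = x * a}

/-- Left kernel `K_l(a) = {x ∈ A : x·a = 0}`. -/
def Kl {A : Type*} [Ring A] (a : A) : Set A := {x | x * a = 0}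
set_option maxHeartbeats 1600000

private lemma stmt18aux_L (K EP : ℝ) (hK : 0 ≤ K) (hEP0 : 0 ≤ EP)
    (h : EP * (K + 1) ^ 2 < 1) : (1 + K) * EP < 1 := by nlinarith

private lemma stmt18aux_G2 (K EP EQ : ℝ) (hK : 0 < K) (hEP0 : 0 ≤ EP) (hEQ0 : 0 ≤ EQ)
    (hEPh : EP * (K + 1) ^ 2 < 1) (hEQh : EQ * (K + 3) < 1) :
    0 < 1 - K * EP - K * (1 + EP) * EQ := by
  have hposm : (0:ℝ) < (K+1)^2*(K+3) := by positivity
  have t1 : EP*(K+1)^2*(K*(K+3)) < 1*(K*(K+3)) :=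
    mul_lt_mul_of_pos_right hEPh (by positivity)
  have t2 : (K*(1+EP)*(K+1)^2)*(EQ*(K+3)) < (K*(1+EP)*(K+1)^2)*1 :=
    mul_lt_mul_of_pos_left hEQh (by positivity)
  have t3 : K*(EP*(K+1)^2) < K*1 := mul_lt_mul_of_pos_left hEPh hK
  have main : (K*EP + K*(1+EP)*EQ)*((K+1)^2*(K+3)) < 1*((K+1)^2*(K+3)) := by
    nlinarith [mul_pos hK hK]
  have := (mul_lt_mul_iff_of_pos_right hposm).mp main
  linarith

private lemma stmt18aux_D0 (K EP EQ : ℝ) (hK : 0 < K) (hEP0 : 0 ≤ EP) (hEQ0 : 0 ≤ EQ)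
    (hEPh : EP * (K + 1) ^ 2 < 1) (hEQh : EQ * (K + 3) < 1) :
    2 * K < (1 - (1 + K) * EP - K * EQ) * ((1 + K) * (K + 3)) := by
  nlinarith [mul_lt_mul_of_pos_right hEPh (by linarith : (0:ℝ) < K + 3),
    mul_lt_mul_of_pos_left hEQh (by nlinarith : (0:ℝ) < K * (1 + K))]

private lemma stmt18aux_KEY (K EP EQ B DD : ℝ) (hK : 0 < K) (hB0 : 0 ≤ B) (hDD0 : 0 ≤ DD)
    (hEP0 : 0 ≤ EP) (hEQ0 : 0 ≤ EQ)
    (hEPh : EP * (K + 1) ^ 2 < 1) (hEQh : EQ * (K + 3) < 1)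
    (hDh : B * DD * ((K + 1) * (K + 4)) < 2 * K) :
    (1 + EQ) * (B * DD) < 1 - (1 + K) * EP - K * EQ := by
  have i4 : (1 + EQ) * (B * DD) * ((K + 1) * (K + 3)) < 2 * K := by
    have e1 : (1 + EQ) * (K + 3) < K + 4 := by nlinarith
    have e2 : (0:ℝ) ≤ B * DD * (K + 1) := by positivity
    nlinarith [mul_le_mul_of_nonneg_left e1.le e2]
  have hΔ₀s := stmt18aux_D0 K EP EQ hK hEP0 hEQ0 hEPh hEQh
  have hpos : (0:ℝ) < (K + 1) * (K + 3) := by nlinarith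
  have hΔ₀ : 0 < 1 - (1 + K) * EP - K * EQ := by nlinarith
  nlinarith [mul_lt_mul_of_pos_right hΔ₀ hpos]

private lemma stmt18aux_EQ1K (K EP EQ : ℝ) (hK : 0 < K) (hEP0 : 0 ≤ EP) (hEQ0 : 0 ≤ EQ)
    (hEPh : EP * (K + 1) ^ 2 < 1) (hEQh : EQ * (K + 3) < 1) :
    EQ * (1 + K) < 1 - K * EP := by
  have hposm : (0:ℝ) < (K + 1) ^ 2 * (K + 3) := by positivity
  have t1 : (EQ * (K + 3)) * ((K + 1) ^ 2 * (K + 1)) < 1 * ((K + 1) ^ 2 * (K + 1)) :=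
    mul_lt_mul_of_pos_right hEQh (by positivity)
  have t2 : (EP * (K + 1) ^ 2) * (K * (K + 3)) < 1 * (K * (K + 3)) :=
    mul_lt_mul_of_pos_right hEPh (by positivity)
  have main : (EQ * (1 + K)) * ((K + 1) ^ 2 * (K + 3)) <
      (1 - K * EP) * ((K + 1) ^ 2 * (K + 3)) := by nlinarith [mul_pos hK hK]
  have := (mul_lt_mul_iff_of_pos_right hposm).mp main
  linarith

private lemma stmt18aux_EQ1F (K EP EQ F1 : ℝ) (hD : 0 < 1 - K * EP) (hEQ0 : 0 ≤ EQ)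
    (hF1D : F1 * (1 - K * EP) ≤ K * (1 + EP)) (h1K : EQ * (1 + K) < 1 - K * EP) :
    EQ + EQ * F1 < 1 := by
  nlinarith [mul_le_mul_of_nonneg_left hF1D hEQ0]

private lemma stmt18aux_W' (K EP EQ B B1 F1 W' : ℝ) (hW'0 : 0 ≤ W') (hEQ0 : 0 ≤ EQ)
    (hD : 0 < 1 - K * EP)
    (hB1D : B1 * (1 - K * EP) ≤ (1 + EP) * B)
    (hF1D : F1 * (1 - K * EP) ≤ K * (1 + EP))
    (hW'n : W' ≤ B1 + W' * (EQ * F1)) :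
    W' * (1 - K * EP - K * (1 + EP) * EQ) ≤ (1 + EP) * B := by
  nlinarith [mul_le_mul_of_nonneg_right hW'n hD.le,
    mul_le_mul_of_nonneg_left hF1D (mul_nonneg hW'0 hEQ0)]

private lemma stmt18aux_d2 (K EP EQ B F1 W' D2 : ℝ) (hW'0 : 0 ≤ W') (hEQ0 : 0 ≤ EQ)
    (hF10 : 0 ≤ F1) (hB0 : 0 ≤ B) (hEP0 : 0 ≤ EP) (hK : 0 ≤ K)
    (hD : 0 < 1 - K * EP) (hG2 : 0 < 1 - K * EP - K * (1 + EP) * EQ)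
    (hW'G2 : W' * (1 - K * EP - K * (1 + EP) * EQ) ≤ (1 + EP) * B)
    (hF1D : F1 * (1 - K * EP) ≤ K * (1 + EP))
    (hd2 : D2 ≤ W' * (EQ * F1) + W' * EQ) :
    D2 * ((1 - K * EP - K * (1 + EP) * EQ) * (1 - K * EP)) ≤
      (1 + EP) * B * (EQ * (1 + K)) := by
  have t1 : (W' * (1 - K * EP - K * (1 + EP) * EQ)) * (EQ * (1 - K * EP)) ≤
      ((1 + EP) * B) * (EQ * (1 - K * EP)) :=
    mul_le_mul_of_nonneg_right hW'G2 (by positivity)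
  have t2 : (W' * (1 - K * EP - K * (1 + EP) * EQ)) * (EQ * (F1 * (1 - K * EP))) ≤
      ((1 + EP) * B) * (EQ * (F1 * (1 - K * EP))) :=
    mul_le_mul_of_nonneg_right hW'G2 (by positivity)
  have t3 : (((1 + EP) * B) * EQ) * (F1 * (1 - K * EP)) ≤
      (((1 + EP) * B) * EQ) * (K * (1 + EP)) :=
    mul_le_mul_of_nonneg_left hF1D (by positivity)
  have t4 : D2 * ((1 - K * EP - K * (1 + EP) * EQ) * (1 - K * EP)) ≤
      (W' * (EQ * F1) + W' * EQ) * ((1 - K * EP - K * (1 + EP) * EQ) * (1 - K * EP)) :=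
    mul_le_mul_of_nonneg_right hd2 (by positivity)
  nlinarith [t1, t2, t3, t4]

private lemma stmt18aux_d1 (K EP B W d1 : ℝ) (hD : 0 < 1 - K * EP)
    (hK : 0 ≤ K) (hEP0 : 0 ≤ EP)
    (hd1n : d1 ≤ (1 + K) * EP * W) (hWD : W * (1 - K * EP) ≤ B) :
    d1 * (1 - K * EP) ≤ (1 + K) * EP * B := by
  nlinarith [mul_le_mul_of_nonneg_right hd1n hD.le,
    mul_le_mul_of_nonneg_left hWD (by positivity : (0:ℝ) ≤ (1 + K) * EP)]

private lemma stmt18aux_T1 (K EP EQ B B1 D2 C0 : ℝ) (hK : 0 < K)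
    (hEP0 : 0 ≤ EP) (hEQ0 : 0 ≤ EQ) (hB0 : 0 ≤ B)
    (hD : 0 < 1 - K * EP) (hG2 : 0 < 1 - K * EP - K * (1 + EP) * EQ)
    (hΔ₀ : 0 < 1 - (1 + K) * EP - K * EQ)
    (hB1D : B1 * (1 - K * EP) ≤ (1 + EP) * B)
    (hd2G2D : D2 * ((1 - K * EP - K * (1 + EP) * EQ) * (1 - K * EP)) ≤
      (1 + EP) * B * (EQ * (1 + K)))
    (hC0n : C0 ≤ B1 + D2) :
    C0 * (1 - (1 + K) * EP - K * EQ) ≤ (1 + EQ) * B := by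
  have hPD0 : (1 + EP) * (1 - (1 + K) * EP - K * EQ) ≤ 1 - K * EP - K * (1 + EP) * EQ := by
    nlinarith [mul_nonneg (mul_nonneg hEP0 hEP0) hK.le]
  have u1 : C0 * ((1 - (1 + K) * EP - K * EQ) * ((1 - K * EP - K * (1 + EP) * EQ) * (1 - K * EP))) ≤
      (B1 + D2) * ((1 - (1 + K) * EP - K * EQ) * ((1 - K * EP - K * (1 + EP) * EQ) * (1 - K * EP))) :=
    mul_le_mul_of_nonneg_right hC0n (by positivity)
  have u2 : (B1 * (1 - K * EP)) * ((1 - (1 + K) * EP - K * EQ) * (1 - K * EP - K * (1 + EP) * EQ)) ≤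
      ((1 + EP) * B) * ((1 - (1 + K) * EP - K * EQ) * (1 - K * EP - K * (1 + EP) * EQ)) :=
    mul_le_mul_of_nonneg_right hB1D (by positivity)
  have u3 : (D2 * ((1 - K * EP - K * (1 + EP) * EQ) * (1 - K * EP))) * (1 - (1 + K) * EP - K * EQ) ≤
      ((1 + EP) * B * (EQ * (1 + K))) * (1 - (1 + K) * EP - K * EQ) :=
    mul_le_mul_of_nonneg_right hd2G2D hΔ₀.le
  have u4 : ((1 + EQ) * B * (1 - K * EP)) * ((1 + EP) * (1 - (1 + K) * EP - K * EQ)) ≤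
      ((1 + EQ) * B * (1 - K * EP)) * (1 - K * EP - K * (1 + EP) * EQ) :=
    mul_le_mul_of_nonneg_left hPD0 (by positivity)
  have main : (C0 * (1 - (1 + K) * EP - K * EQ)) * ((1 - K * EP - K * (1 + EP) * EQ) * (1 - K * EP)) ≤
      ((1 + EQ) * B) * ((1 - K * EP - K * (1 + EP) * EQ) * (1 - K * EP)) := by
    nlinarith [u1, u2, u3, u4]
  exact (mul_le_mul_iff_of_pos_right (by positivity)).mp main

private lemma stmt18aux_T2 (K EP EQ B d1 D2 : ℝ) (hK : 0 < K)
    (hEP0 : 0 ≤ EP) (hEQ0 : 0 ≤ EQ) (hB0 : 0 ≤ B) (hd10 : 0 ≤ d1)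
    (hD : 0 < 1 - K * EP) (hG2 : 0 < 1 - K * EP - K * (1 + EP) * EQ)
    (hΔ₀ : 0 < 1 - (1 + K) * EP - K * EQ)
    (hd1D : d1 * (1 - K * EP) ≤ (1 + K) * EP * B)
    (hd2G2D : D2 * ((1 - K * EP - K * (1 + EP) * EQ) * (1 - K * EP)) ≤
      (1 + EP) * B * (EQ * (1 + K))) :
    (d1 + D2) * (1 - (1 + K) * EP - K * EQ) ≤ B * ((1 + K) * (EP + EQ)) := by
  have v1 : (d1 * (1 - K * EP)) * ((1 - (1 + K) * EP - K * EQ) * (1 - K * EP - K * (1 + EP) * EQ)) ≤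
      ((1 + K) * EP * B) * ((1 - (1 + K) * EP - K * EQ) * (1 - K * EP - K * (1 + EP) * EQ)) :=
    mul_le_mul_of_nonneg_right hd1D (by positivity)
  have v2 : (D2 * ((1 - K * EP - K * (1 + EP) * EQ) * (1 - K * EP))) * (1 - (1 + K) * EP - K * EQ) ≤
      ((1 + EP) * B * (EQ * (1 + K))) * (1 - (1 + K) * EP - K * EQ) :=
    mul_le_mul_of_nonneg_right hd2G2D hΔ₀.le
  have v3 : (0:ℝ) ≤ (B * (1 + K)) * ((EP * EP) * ((1 + EQ) * (1 - K * EP))) := by positivity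
  have main : ((d1 + D2) * (1 - (1 + K) * EP - K * EQ)) * ((1 - K * EP - K * (1 + EP) * EQ) * (1 - K * EP)) ≤
      (B * ((1 + K) * (EP + EQ))) * ((1 - K * EP - K * (1 + EP) * EQ) * (1 - K * EP)) := by
    nlinarith [v1, v2, v3]
  exact (mul_le_mul_iff_of_pos_right (by positivity)).mp main

private lemma stmt18aux_C (K EP EQ B DD C C0 : ℝ) (hC00 : 0 ≤ C0) (hC0 : 0 ≤ C)
    (hDD0 : 0 ≤ DD) (hB0 : 0 ≤ B) (hEQ0 : 0 ≤ EQ)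
    (hΔ₀ : 0 < 1 - (1 + K) * EP - K * EQ)
    (hC0Δ : C0 * (1 - (1 + K) * EP - K * EQ) ≤ (1 + EQ) * B)
    (hCn : C ≤ C0 + C * (DD * C0)) :
    C * ((1 - (1 + K) * EP - K * EQ) - (1 + EQ) * B * DD) ≤ (1 + EQ) * B := by
  have w1 : C * (1 - (1 + K) * EP - K * EQ) ≤
      (C0 + C * (DD * C0)) * (1 - (1 + K) * EP - K * EQ) :=
    mul_le_mul_of_nonneg_right hCn hΔ₀.le
  have w2 : (C * DD) * (C0 * (1 - (1 + K) * EP - K * EQ)) ≤ (C * DD) * ((1 + EQ) * B) :=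
    mul_le_mul_of_nonneg_left hC0Δ (by positivity)
  nlinarith [w1, w2]

theorem stmt18 {A : Type*} [NormedRing A] [NormedAlgebra ℂ A] [CompleteSpace A]
    (a δa p q b p' q' : A) (hp : p * p = p) (hq : q * q = q)
    (hp' : p' * p' = p') (hq' : q' * q' = q')
    (hb1 : b * a * b = b) (hb2 : Rr b = Rr p) (hb3 : Kr b = Rr q)
    (hpp' : ‖p - p'‖ < 1 / (‖a‖ * ‖b‖ + 1) ^ 2)
    (hqq' : ‖q - q'‖ < 1 / (‖a‖ * ‖b‖ + 3))
    (hδa : ‖b‖ * ‖δa‖ < 2 * (‖a‖ * ‖b‖) / ((‖a‖ * ‖b‖ + 1) * (‖a‖ * ‖b‖ + 4))) :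
    ∃ c : A, c * (a + δa) * c = c ∧ Rr c = Rr p' ∧ Kr c = Rr q' ∧
      ‖c‖ ≤ (1 + ‖q - q'‖) * ‖b‖ /
          (1 - (1 + ‖a‖ * ‖b‖) * ‖p - p'‖ - ‖a‖ * ‖b‖ * ‖q - q'‖ -
            (1 + ‖q - q'‖) * ‖b‖ * ‖δa‖) ∧
      ‖c - b‖ ≤ (‖b‖ / (1 - (1 + ‖a‖ * ‖b‖) * ‖p - p'‖ - ‖a‖ * ‖b‖ * ‖q - q'‖)) *
          ((1 + ‖a‖ * ‖b‖) * (‖p - p'‖ + ‖q - q'‖) +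
            (1 + ‖q - q'‖) ^ 2 * ‖δa‖ * ‖b‖ /
              (1 - (1 + ‖a‖ * ‖b‖) * ‖p - p'‖ - ‖a‖ * ‖b‖ * ‖q - q'‖ -
                (1 + ‖q - q'‖) * ‖b‖ * ‖δa‖)) := by
  -- ## extraction of algebraic facts from the hypotheses
  have hpb : p * b = b := by
    have hmem : b ∈ Rr p := by rw [← hb2]; exact ⟨1, (mul_one b).symm⟩
    obtain ⟨x, hx⟩ := hmem
    rw [hx, ← mul_assoc, hp]
  have hep : b * a * p = p := by
    have hmem : p ∈ Rr b := by rw [hb2]; exact ⟨1, (mul_one p).symm⟩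
    obtain ⟨s, hs⟩ := hmem
    calc b * a * p = b * a * b * s := by rw [hs, ← mul_assoc]
      _ = b * s := by rw [hb1]
      _ = p := hs.symm
  have hpe : p * (b * a) = b * a := by rw [← mul_assoc, hpb]
  have hbq : b * q = 0 := by
    have hmem : q ∈ Kr b := by rw [hb3]; exact ⟨q, hq.symm⟩
    exact hmem
  have hker : ∀ x, b * x = 0 → ∃ y, x = q * y := by
    intro x hx
    have hmem : x ∈ Kr b := hx
    rwa [hb3] at hmem
  have hee : b * a * (b * a) = b * a := by rw [← mul_assoc, hb1]
  -- ## real abbreviations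
  set B := ‖b‖ with hB
  set DD := ‖δa‖ with hDD
  set EP := ‖p - p'‖ with hEP
  set EQ := ‖q - q'‖ with hEQ
  set K := ‖a‖ * B with hKdef
  have hA0 : (0:ℝ) ≤ ‖a‖ := norm_nonneg a
  have hB0 : (0:ℝ) ≤ B := norm_nonneg b
  have hDD0 : (0:ℝ) ≤ DD := norm_nonneg δa
  have hEP0 : (0:ℝ) ≤ EP := norm_nonneg _
  have hEQ0 : (0:ℝ) ≤ EQ := norm_nonneg _
  have hKnn : (0:ℝ) ≤ K := mul_nonneg hA0 hB0
  have hK0 : (0:ℝ) < K := by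
    rcases hKnn.lt_or_eq with h | h
    · exact h
    · exfalso
      rw [← h] at hδa
      norm_num at hδa
      nlinarith [mul_nonneg hB0 hDD0]
  have hEPh : EP * (K + 1) ^ 2 < 1 := by
    have h2 : (0:ℝ) < (K + 1) ^ 2 := by positivity
    calc EP * (K+1)^2 < (1 / (K+1)^2) * (K+1)^2 := by
          apply mul_lt_mul_of_pos_right hpp' h2
      _ = 1 := by field_simp
  have hEQh : EQ * (K + 3) < 1 := by
    have h2 : (0:ℝ) < K + 3 := by linarith
    calc EQ * (K+3) < (1 / (K+3)) * (K+3) := by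
          apply mul_lt_mul_of_pos_right hqq' h2
      _ = 1 := by field_simp
  have hDh : B * DD * ((K + 1) * (K + 4)) < 2 * K := by
    have h2 : (0:ℝ) < (K + 1) * (K + 4) := by nlinarith
    calc B * DD * ((K+1)*(K+4)) < (2 * K / ((K+1)*(K+4))) * ((K+1)*(K+4)) := by
          apply mul_lt_mul_of_pos_right hδa h2
      _ = 2 * K := by field_simp
  -- ## basic real inequalities
  have hL2 : (1 + K) * EP < 1 := stmt18aux_L K EP hKnn hEP0 hEPh
  have hL1 : K * EP < 1 := by nlinarith
  have hD : (0:ℝ) < 1 - K * EP := by linarith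
  -- G2 := (1 - K*EP) - K*(1+EP)*EQ > 0
  have hG2 : (0:ℝ) < 1 - K * EP - K * (1 + EP) * EQ :=
    stmt18aux_G2 K EP EQ hK0 hEP0 hEQ0 hEPh hEQh
  -- Δ₀ > 0, indeed Δ₀*(1+K)*(K+3) > 2K
  have hΔ₀s : 2 * K < (1 - (1 + K) * EP - K * EQ) * ((1 + K) * (K + 3)) :=
    stmt18aux_D0 K EP EQ hK0 hEP0 hEQ0 hEPh hEQh
  have hΔ₀ : (0:ℝ) < 1 - (1 + K) * EP - K * EQ := by nlinarith
  have hKEY : (1 + EQ) * (B * DD) < 1 - (1 + K) * EP - K * EQ :=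
    stmt18aux_KEY K EP EQ B DD hK0 hB0 hDD0 hEP0 hEQ0 hEPh hEQh hDh
  -- ## Stage 1 : unit n = 1 - (b*a)*(p-p'), w = n⁻¹ b, b₁ = p' * w
  have htp : ‖b * a * (p - p')‖ < 1 := by
    calc ‖b * a * (p - p')‖ ≤ ‖b * a‖ * ‖p - p'‖ := norm_mul_le _ _
      _ ≤ (‖b‖ * ‖a‖) * EP := by
          apply mul_le_mul_of_nonneg_right (norm_mul_le b a) hEP0
      _ = K * EP := by rw [hKdef, hB]; ring
      _ < 1 := hL1
  set Np := Units.oneSub (b * a * (p - p')) htp with hNpdef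
  have hnpval : (Np : A) = 1 - b * a * (p - p') := Units.val_oneSub _ _
  set w : A := ↑Np⁻¹ * b with hwdef
  have hbw' : w - b * a * ((p - p') * w) = b := by
    have h := Np.mul_inv_cancel_left b
    rw [hnpval] at h
    rw [← hwdef] at h
    calc w - b * a * ((p - p') * w) = (1 - b * a * (p - p')) * w := by noncomm_ring
      _ = b := h
  have hw_eq : w = b + b * a * ((p - p') * w) := by
    calc w = (w - b * a * ((p - p') * w)) + b * a * ((p - p') * w) := by noncomm_ring
      _ = b + b * a * ((p - p') * w) := by rw [hbw']
  have hpw : p * w = w := by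
    calc p * w = p * b + p * (b * a) * ((p - p') * w) := by
          conv_lhs => rw [hw_eq]
          noncomm_ring
      _ = b + b * a * ((p - p') * w) := by rw [hpb, hpe]
      _ = w := hw_eq.symm
  set b₁ := p' * w with hb₁def
  have hbab₁ : b * a * b₁ = b := by
    calc b * a * b₁ = b * a * p * w + b * a * ((p' - p) * w) := by
          rw [hb₁def]; noncomm_ring
      _ = w + b * a * ((p' - p) * w) := by rw [hep, hpw]
      _ = w - b * a * ((p - p') * w) := by noncomm_ring
      _ = b := hbw'
  have hb₁ab₁ : b₁ * a * b₁ = b₁ := by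
    calc b₁ * a * b₁ = p' * (↑Np⁻¹ * (b * a * b₁)) := by
          rw [hb₁def, hwdef]; noncomm_ring
      _ = p' * (↑Np⁻¹ * b) := by rw [hbab₁]
      _ = b₁ := by rw [hb₁def, hwdef]
  have hb₁q : b₁ * q = 0 := by
    calc b₁ * q = p' * (↑Np⁻¹ * (b * q)) := by rw [hb₁def, hwdef]; noncomm_ring
      _ = 0 := by rw [hbq, mul_zero, mul_zero]
  have hkerb₁ : ∀ x, b₁ * x = 0 → ∃ y, x = q * y := by
    intro x hx
    apply hker
    calc b * x = b * a * b₁ * x := by rw [hbab₁]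
      _ = b * a * (b₁ * x) := by rw [mul_assoc]
      _ = 0 := by rw [hx, mul_zero]
  -- range witness : p' = b₁ * t₁
  have htz : ‖(p' - p) - b * a * (p' - p)‖ < 1 := by
    have h1 : ‖(p' - p) - b * a * (p' - p)‖ ≤ ‖p' - p‖ + ‖b * a * (p' - p)‖ :=
      norm_sub_le _ _
    have h2 : ‖b * a * (p' - p)‖ ≤ (‖b‖ * ‖a‖) * ‖p' - p‖ := by
      calc ‖b * a * (p' - p)‖ ≤ ‖b * a‖ * ‖p' - p‖ := norm_mul_le _ _
        _ ≤ (‖b‖ * ‖a‖) * ‖p' - p‖ := by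
            apply mul_le_mul_of_nonneg_right (norm_mul_le b a) (norm_nonneg _)
    have h3 : ‖p' - p‖ = EP := by rw [hEP, norm_sub_rev]
    rw [h3] at h1 h2
    have : ‖b‖ * ‖a‖ = K := by rw [hKdef, hB]; ring
    rw [this] at h2
    calc ‖(p' - p) - b * a * (p' - p)‖ ≤ EP + K * EP := by linarith
      _ = (1 + K) * EP := by ring
      _ < 1 := hL2
  set Z := Units.oneSub ((p' - p) - b * a * (p' - p)) htz with hZdef
  have hzval : (Z : A) = 1 - ((p' - p) - b * a * (p' - p)) := Units.val_oneSub _ _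
  have hp'zp' : p' * (Z : A) = p' * (b * a) * p' := by
    have h1 : p' * (Z : A) =
        p' - (p' * p' - p' * p) + (p' * (b * a) * p' - p' * (b * a * p)) := by
      rw [hzval]; noncomm_ring
    rw [h1, hp', hep]
    noncomm_ring
  have heknn : b * a * (1 + (p' - p) * (b * a)) = (Np : A) * (b * a) := by
    rw [hnpval]; noncomm_ring
  have hrange₁ : b₁ * (a * ((1 + (p' - p) * (b * a)) * (b * a * (p' * ↑Z⁻¹)))) = p' := by
    have e1 : b₁ * (a * ((1 + (p' - p) * (b * a)) * (b * a * (p' * ↑Z⁻¹)))) =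
        p' * (↑Np⁻¹ * ((b * a * (1 + (p' - p) * (b * a))) * (b * a * (p' * ↑Z⁻¹)))) := by
      rw [hb₁def, hwdef]; noncomm_ring
    rw [e1, heknn]
    have e2 : (Np : A) * (b * a) * (b * a * (p' * ↑Z⁻¹)) =
        (Np : A) * (b * a * (b * a) * (p' * ↑Z⁻¹)) := by noncomm_ring
    rw [e2, hee]
    have e3 : b * a * (p' * ↑Z⁻¹) = (Np:A) * (b*a*(p'*↑Z⁻¹)) → True := fun _ => trivial
    rw [Np.inv_mul_cancel_left]
    calc p' * (b * a * (p' * ↑Z⁻¹)) = p' * (b * a) * p' * ↑Z⁻¹ := by noncomm_ring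
      _ = p' * (Z : A) * ↑Z⁻¹ := by rw [← hp'zp']
      _ = p' := by rw [mul_assoc, Z.mul_inv, mul_one]
  -- ## norm bounds for w and b₁
  have hWn : ‖w‖ ≤ B + K * EP * ‖w‖ := by
    have h1 : ‖b * a * ((p - p') * w)‖ ≤ K * EP * ‖w‖ := by
      calc ‖b * a * ((p - p') * w)‖ ≤ ‖b * a‖ * ‖(p - p') * w‖ := norm_mul_le _ _
        _ ≤ (‖b‖ * ‖a‖) * (‖p - p'‖ * ‖w‖) := by
            apply mul_le_mul (norm_mul_le b a) (norm_mul_le _ _) (norm_nonneg _)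
            positivity
        _ = K * EP * ‖w‖ := by rw [hKdef, hB, hEP]; ring
    calc ‖w‖ = ‖b + b * a * ((p - p') * w)‖ := by conv_lhs => rw [hw_eq]
      _ ≤ ‖b‖ + ‖b * a * ((p - p') * w)‖ := norm_add_le _ _
      _ ≤ B + K * EP * ‖w‖ := by rw [← hB]; linarith
  have hW0 : (0:ℝ) ≤ ‖w‖ := norm_nonneg w
  have hWD : ‖w‖ * (1 - K * EP) ≤ B := by nlinarith
  have hd₁e : b₁ - b = (p' - p) * w - b * a * ((p' - p) * w) := by
    have h1 : b₁ = (p' - p) * w + p * w := by rw [hb₁def]; noncomm_ring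
    rw [h1, hpw]
    calc (p' - p) * w + w - b = (p' - p) * w + w - (w - b * a * ((p - p') * w)) := by
          rw [hbw']
      _ = (p' - p) * w - b * a * ((p' - p) * w) := by noncomm_ring
  have hd₁n : ‖b₁ - b‖ ≤ (1 + K) * EP * ‖w‖ := by
    rw [hd₁e]
    have h1 : ‖(p' - p) * w‖ ≤ EP * ‖w‖ := by
      calc ‖(p' - p) * w‖ ≤ ‖p' - p‖ * ‖w‖ := norm_mul_le _ _
        _ = EP * ‖w‖ := by rw [hEP, norm_sub_rev]
    have h2 : ‖b * a * ((p' - p) * w)‖ ≤ K * (EP * ‖w‖) := by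
      calc ‖b * a * ((p' - p) * w)‖ ≤ ‖b * a‖ * ‖(p' - p) * w‖ := norm_mul_le _ _
        _ ≤ (‖b‖ * ‖a‖) * (EP * ‖w‖) := by
            apply mul_le_mul (norm_mul_le b a) h1 (norm_nonneg _)
            positivity
        _ = K * (EP * ‖w‖) := by rw [hKdef, hB]; ring
    calc ‖(p' - p) * w - b * a * ((p' - p) * w)‖
        ≤ ‖(p' - p) * w‖ + ‖b * a * ((p' - p) * w)‖ := norm_sub_le _ _
      _ ≤ (1 + K) * EP * ‖w‖ := by linarith
  have hB₁n : ‖b₁‖ ≤ B + (1 + K) * EP * ‖w‖ := by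
    calc ‖b₁‖ = ‖b + (b₁ - b)‖ := by rw [show b + (b₁ - b) = b₁ by abel]
      _ ≤ ‖b‖ + ‖b₁ - b‖ := norm_add_le _ _
      _ ≤ B + (1 + K) * EP * ‖w‖ := by rw [← hB]; linarith
  have hB₁D : ‖b₁‖ * (1 - K * EP) ≤ (1 + EP) * B := by
    nlinarith [mul_le_mul_of_nonneg_right hB₁n hD.le,
      mul_le_mul_of_nonneg_left hWD (by positivity : (0:ℝ) ≤ (1 + K) * EP)]
  have hB₁0 : (0:ℝ) ≤ ‖b₁‖ := norm_nonneg _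
  -- ## Stage 2 : f₁ = a*b₁, unit n' = 1 - (q'-q)*f₁, w' = b₁ * n'⁻¹, c₀ = w'*(1-q')
  set f₁ := a * b₁ with hf₁def
  have hF₁n : ‖f₁‖ ≤ ‖a‖ * ‖b₁‖ := norm_mul_le _ _
  have hF₁D : ‖f₁‖ * (1 - K * EP) ≤ K * (1 + EP) := by
    have := mul_le_mul_of_nonneg_left hB₁D hA0
    calc ‖f₁‖ * (1 - K * EP) ≤ (‖a‖ * ‖b₁‖) * (1 - K * EP) := by
          apply mul_le_mul_of_nonneg_right hF₁n hD.le
      _ = ‖a‖ * (‖b₁‖ * (1 - K * EP)) := by ring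
      _ ≤ ‖a‖ * ((1 + EP) * B) := this
      _ = K * (1 + EP) := by rw [hKdef]; ring
  have hF₁0 : (0:ℝ) ≤ ‖f₁‖ := norm_nonneg _
  have hEQF₁ : EQ * ‖f₁‖ < 1 := by nlinarith [mul_le_mul_of_nonneg_left hF₁D hEQ0]
  have hf₁f₁ : f₁ * f₁ = f₁ := by
    calc f₁ * f₁ = a * (b₁ * a * b₁) := by rw [hf₁def]; noncomm_ring
      _ = f₁ := by rw [hb₁ab₁, hf₁def]
  have hb₁f₁ : b₁ * f₁ = b₁ := by rw [hf₁def, ← mul_assoc, hb₁ab₁]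
  have hf₁q : f₁ * q = 0 := by rw [hf₁def, mul_assoc, hb₁q, mul_zero]
  have h1qf₁ : (1 - q) * f₁ = 1 - q := by
    obtain ⟨y, hy⟩ := hkerb₁ (1 - f₁) (by
      calc b₁ * (1 - f₁) = b₁ - b₁ * a * b₁ := by rw [hf₁def]; noncomm_ring
        _ = 0 := by rw [hb₁ab₁, sub_self])
    have hq1f : q * (1 - f₁) = 1 - f₁ := by
      rw [hy, ← mul_assoc, hq]
    calc (1 - q) * f₁ = (1 - q) - (1 - f₁) + q * (1 - f₁) := by noncomm_ring
      _ = (1 - q) - (1 - f₁) + (1 - f₁) := by rw [hq1f]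
      _ = 1 - q := by noncomm_ring
  have htq : ‖(q' - q) * f₁‖ < 1 := by
    calc ‖(q' - q) * f₁‖ ≤ ‖q' - q‖ * ‖f₁‖ := norm_mul_le _ _
      _ = EQ * ‖f₁‖ := by rw [hEQ, norm_sub_rev]
      _ < 1 := hEQF₁
  set N' := Units.oneSub ((q' - q) * f₁) htq with hN'def
  have hn'val : (N' : A) = 1 - (q' - q) * f₁ := Units.val_oneSub _ _
  set w' : A := b₁ * ↑N'⁻¹ with hw'def
  have hbw'' : w' - w' * ((q' - q) * f₁) = b₁ := by
    have h := Np.mul_inv_cancel_left b -- dummy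
    have h2 : w' * (N' : A) = b₁ := by
      rw [hw'def, mul_assoc, N'.inv_mul, mul_one]
    rw [hn'val] at h2
    calc w' - w' * ((q' - q) * f₁) = w' * (1 - (q' - q) * f₁) := by noncomm_ring
      _ = b₁ := h2
  have hw'_eq : w' = b₁ + w' * ((q' - q) * f₁) := by
    calc w' = (w' - w' * ((q' - q) * f₁)) + w' * ((q' - q) * f₁) := by noncomm_ring
      _ = b₁ + w' * ((q' - q) * f₁) := by rw [hbw'']
  have hw'f₁ : w' * f₁ = w' := by
    have e : w' * f₁ = b₁ * f₁ + w' * ((q' - q) * (f₁ * f₁)) := by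
      conv_lhs => rw [hw'_eq]
      noncomm_ring
    rw [e, hb₁f₁, hf₁f₁, ← hw'_eq]
  have hw'q : w' * q = 0 := by
    have e : w' * q = b₁ * q + w' * ((q' - q) * (f₁ * q)) := by
      conv_lhs => rw [hw'_eq]
      noncomm_ring
    rw [e, hb₁q, hf₁q, mul_zero, mul_zero, add_zero]
  set c₀ := w' * (1 - q') with hc₀def
  -- ## c₀ identities
  have hc₀f₁ : c₀ * f₁ = b₁ := by
    have hqf₁' : q * f₁ = f₁ - 1 + q := by
      have h2 : f₁ - q * f₁ = 1 - q := by
        calc f₁ - q * f₁ = (1 - q) * f₁ := by noncomm_ring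
          _ = 1 - q := h1qf₁
      calc q * f₁ = f₁ - (f₁ - q * f₁) := by noncomm_ring
        _ = f₁ - (1 - q) := by rw [h2]
        _ = f₁ - 1 + q := by noncomm_ring
    have e1 : c₀ * f₁ = w' * f₁ - w' * ((q' - q) * f₁) - w' * (q * f₁) := by
      rw [hc₀def]; noncomm_ring
    rw [e1, hqf₁', hw'f₁]
    have e2 : w' - w' * ((q' - q) * f₁) - w' * (f₁ - 1 + q) =
        (w' - w' * ((q' - q) * f₁)) - (w' * f₁ - w' + w' * q) := by noncomm_ring
    rw [e2, hbw'', hw'f₁, hw'q]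
    noncomm_ring
  have hc₀ab₁ : c₀ * a * b₁ = b₁ := by
    calc c₀ * a * b₁ = c₀ * f₁ := by rw [hf₁def]; noncomm_ring
      _ = b₁ := hc₀f₁
  have hc₀ac₀ : c₀ * a * c₀ = c₀ := by
    have e0 : ∀ X : A, X * a * c₀ = (X * a * b₁) * (↑N'⁻¹ * (1 - q')) := by
      intro X
      rw [hc₀def, hw'def]; noncomm_ring
    calc c₀ * a * c₀ = (c₀ * a * b₁) * (↑N'⁻¹ * (1 - q')) := e0 c₀
      _ = b₁ * (↑N'⁻¹ * (1 - q')) := by rw [hc₀ab₁]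
      _ = c₀ := by rw [hc₀def, hw'def]; noncomm_ring
  have hc₀q' : c₀ * q' = 0 := by
    have e1 : c₀ * q' = w' * (q' - q' * q') := by rw [hc₀def]; noncomm_ring
    rw [e1, hq', sub_self, mul_zero]
  -- ## kernel inclusion witness for c₀
  have hEQ1K : EQ * (1 + K) < 1 - K * EP := stmt18aux_EQ1K K EP EQ hK0 hEP0 hEQ0 hEPh hEQh
  have hEQ1F : EQ + EQ * ‖f₁‖ < 1 := stmt18aux_EQ1F K EP EQ ‖f₁‖ hD hEQ0 hF₁D hEQ1K
  have htz' : ‖(q - q') - (q - q') * f₁‖ < 1 := by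
    have h1 : ‖(q - q') * f₁‖ ≤ EQ * ‖f₁‖ := by
      calc ‖(q - q') * f₁‖ ≤ ‖q - q'‖ * ‖f₁‖ := norm_mul_le _ _
        _ = EQ * ‖f₁‖ := by rw [hEQ]
    calc ‖(q - q') - (q - q') * f₁‖ ≤ ‖q - q'‖ + ‖(q - q') * f₁‖ := norm_sub_le _ _
      _ ≤ EQ + EQ * ‖f₁‖ := by rw [← hEQ]; linarith
      _ < 1 := hEQ1F
  set Z' := Units.oneSub ((q - q') - (q - q') * f₁) htz' with hZ'def
  have hz'val : (Z' : A) = 1 - ((q - q') - (q - q') * f₁) := Units.val_oneSub _ _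
  have hkf : (1 + f₁ * ((q - q') * f₁)) * f₁ = f₁ * (N' : A) := by
    have e1 : (1 + f₁ * ((q - q') * f₁)) * f₁ = f₁ + f₁ * ((q - q') * (f₁ * f₁)) := by
      noncomm_ring
    rw [e1, hf₁f₁, hn'val]
    noncomm_ring
  have hz'id : (Z' : A) * (1 - q') = (1 - q') * (f₁ * (1 - q')) := by
    have e2 : (1 - q') * (f₁ * (1 - q')) =
        (1 - q) * f₁ * (1 - q') + (q - q') * f₁ * (1 - q') := by noncomm_ring
    rw [e2, h1qf₁, hz'val]
    have e3 : q' * (1 - q') = 0 := by rw [mul_sub, mul_one, hq', sub_self]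
    have e5 : (1 - (q - q' - (q - q') * f₁)) * (1 - q') =
        q' * (1 - q') + ((1 - q) * (1 - q') + (q - q') * f₁ * (1 - q')) := by noncomm_ring
    rw [e5, e3, zero_add]
  have ht'c₀ : (↑Z'⁻¹ * ((1 - q') * (f₁ * ((1 + f₁ * ((q - q') * f₁)) * a)))) * c₀ = 1 - q' := by
    have e6 : (↑Z'⁻¹ * ((1 - q') * (f₁ * ((1 + f₁ * ((q - q') * f₁)) * a)))) * c₀ =
        ↑Z'⁻¹ * ((1 - q') * (f₁ * ((1 + f₁ * ((q - q') * f₁)) * f₁ * (↑N'⁻¹ * (1 - q'))))) := by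
      rw [hc₀def, hw'def, hf₁def]; noncomm_ring
    rw [e6, hkf]
    have e7 : f₁ * (N' : A) * (↑N'⁻¹ * (1 - q')) = f₁ * (1 - q') := by
      rw [mul_assoc, N'.mul_inv_cancel_left]
    rw [e7]
    have e8 : (1 - q') * (f₁ * (f₁ * (1 - q'))) = (1 - q') * (f₁ * f₁ * (1 - q')) := by
      noncomm_ring
    rw [e8, hf₁f₁, ← hz'id, Z'.inv_mul_cancel_left]
  have hkerc₀ : ∀ x, c₀ * x = 0 → ∃ y, x = q' * y := by
    intro x hx
    refine ⟨x, ?_⟩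
    have h1 : (1 - q') * x = 0 := by
      calc (1 - q') * x
          = ((↑Z'⁻¹ * ((1 - q') * (f₁ * ((1 + f₁ * ((q - q') * f₁)) * a)))) * c₀) * x := by
            rw [ht'c₀]
        _ = (↑Z'⁻¹ * ((1 - q') * (f₁ * ((1 + f₁ * ((q - q') * f₁)) * a)))) * (c₀ * x) := by
            rw [mul_assoc]
        _ = 0 := by rw [hx, mul_zero]
    have h2 : x - q' * x = 0 := by
      calc x - q' * x = (1 - q') * x := by noncomm_ring
        _ = 0 := h1
    have := sub_eq_zero.mp h2
    exact this
  -- ## norms of w', c₀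
  have hW'0 : (0:ℝ) ≤ ‖w'‖ := norm_nonneg _
  have hW'n : ‖w'‖ ≤ ‖b₁‖ + ‖w'‖ * (EQ * ‖f₁‖) := by
    have h1 : ‖w' * ((q' - q) * f₁)‖ ≤ ‖w'‖ * (EQ * ‖f₁‖) := by
      calc ‖w' * ((q' - q) * f₁)‖ ≤ ‖w'‖ * ‖(q' - q) * f₁‖ := norm_mul_le _ _
        _ ≤ ‖w'‖ * (‖q' - q‖ * ‖f₁‖) := by
            apply mul_le_mul_of_nonneg_left (norm_mul_le _ _) hW'0
        _ = ‖w'‖ * (EQ * ‖f₁‖) := by rw [hEQ, norm_sub_rev]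
    calc ‖w'‖ = ‖b₁ + w' * ((q' - q) * f₁)‖ := by conv_lhs => rw [hw'_eq]
      _ ≤ ‖b₁‖ + ‖w' * ((q' - q) * f₁)‖ := norm_add_le _ _
      _ ≤ ‖b₁‖ + ‖w'‖ * (EQ * ‖f₁‖) := by linarith
  have hW'G2 : ‖w'‖ * (1 - K * EP - K * (1 + EP) * EQ) ≤ (1 + EP) * B :=
    stmt18aux_W' K EP EQ B ‖b₁‖ ‖f₁‖ ‖w'‖ hW'0 hEQ0 hD hB₁D hF₁D hW'n
  have hd₂e : c₀ - b₁ = w' * ((q' - q) * f₁) - w' * (q' - q) := by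
    have e : c₀ = w' - w' * q - w' * (q' - q) := by rw [hc₀def]; noncomm_ring
    rw [e, hw'q, ← hbw'']
    noncomm_ring
  have hd₂n : ‖c₀ - b₁‖ ≤ ‖w'‖ * (EQ * ‖f₁‖) + ‖w'‖ * EQ := by
    rw [hd₂e]
    have h1 : ‖w' * ((q' - q) * f₁)‖ ≤ ‖w'‖ * (EQ * ‖f₁‖) := by
      calc ‖w' * ((q' - q) * f₁)‖ ≤ ‖w'‖ * ‖(q' - q) * f₁‖ := norm_mul_le _ _
        _ ≤ ‖w'‖ * (‖q' - q‖ * ‖f₁‖) := by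
            apply mul_le_mul_of_nonneg_left (norm_mul_le _ _) hW'0
        _ = ‖w'‖ * (EQ * ‖f₁‖) := by rw [hEQ, norm_sub_rev]
    have h2 : ‖w' * (q' - q)‖ ≤ ‖w'‖ * EQ := by
      calc ‖w' * (q' - q)‖ ≤ ‖w'‖ * ‖q' - q‖ := norm_mul_le _ _
        _ = ‖w'‖ * EQ := by rw [hEQ, norm_sub_rev]
    calc ‖w' * ((q' - q) * f₁) - w' * (q' - q)‖
        ≤ ‖w' * ((q' - q) * f₁)‖ + ‖w' * (q' - q)‖ := norm_sub_le _ _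
      _ ≤ ‖w'‖ * (EQ * ‖f₁‖) + ‖w'‖ * EQ := by linarith
  have hd₂G2D : ‖c₀ - b₁‖ * ((1 - K * EP - K * (1 + EP) * EQ) * (1 - K * EP)) ≤
      (1 + EP) * B * (EQ * (1 + K)) :=
    stmt18aux_d2 K EP EQ B ‖f₁‖ ‖w'‖ ‖c₀ - b₁‖ hW'0 hEQ0 hF₁0 hB0 hEP0 hKnn hD hG2
      hW'G2 hF₁D hd₂n
  have hC₀n : ‖c₀‖ ≤ ‖b₁‖ + ‖c₀ - b₁‖ := by
    calc ‖c₀‖ = ‖b₁ + (c₀ - b₁)‖ := by rw [show b₁ + (c₀ - b₁) = c₀ by abel]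
      _ ≤ ‖b₁‖ + ‖c₀ - b₁‖ := norm_add_le _ _
  have hC₀Δ : ‖c₀‖ * (1 - (1 + K) * EP - K * EQ) ≤ (1 + EQ) * B :=
    stmt18aux_T1 K EP EQ B ‖b₁‖ ‖c₀ - b₁‖ ‖c₀‖ hK0 hEP0 hEQ0 hB0 hD hG2 hΔ₀ hB₁D hd₂G2D hC₀n
  have hC₀0 : (0:ℝ) ≤ ‖c₀‖ := norm_nonneg _
  -- ## Stage 3 : perturbation of a
  have hDC₀ : DD * ‖c₀‖ < 1 := by
    have h1 : DD * (‖c₀‖ * (1 - (1 + K) * EP - K * EQ)) ≤ DD * ((1 + EQ) * B) :=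
      mul_le_mul_of_nonneg_left hC₀Δ hDD0
    nlinarith
  have htg : ‖-(δa * c₀)‖ < 1 := by
    rw [norm_neg]
    calc ‖δa * c₀‖ ≤ ‖δa‖ * ‖c₀‖ := norm_mul_le _ _
      _ = DD * ‖c₀‖ := by rw [hDD]
      _ < 1 := hDC₀
  have hth : ‖-(c₀ * δa)‖ < 1 := by
    rw [norm_neg]
    calc ‖c₀ * δa‖ ≤ ‖c₀‖ * ‖δa‖ := norm_mul_le _ _
      _ = DD * ‖c₀‖ := by rw [hDD]; ring
      _ < 1 := hDC₀
  set G := Units.oneSub (-(δa * c₀)) htg with hGdef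
  set H := Units.oneSub (-(c₀ * δa)) hth with hHdef
  have hGval : (G : A) = 1 + δa * c₀ := by
    rw [hGdef, Units.val_oneSub, sub_neg_eq_add]
  have hHval : (H : A) = 1 + c₀ * δa := by
    rw [hHdef, Units.val_oneSub, sub_neg_eq_add]
  set c := c₀ * ↑G⁻¹ with hcdef
  have hcH : c = ↑H⁻¹ * c₀ := by
    have e2 : (H : A) * c₀ = c₀ * (G : A) := by rw [hHval, hGval]; noncomm_ring
    have e : (H : A) * (c₀ * ↑G⁻¹) = c₀ := by
      calc (H : A) * (c₀ * ↑G⁻¹) = ((H : A) * c₀) * ↑G⁻¹ := by rw [← mul_assoc]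
        _ = (c₀ * (G : A)) * ↑G⁻¹ := by rw [e2]
        _ = c₀ := Units.mul_inv_cancel_right _ _
    calc c = ↑H⁻¹ * ((H : A) * (c₀ * ↑G⁻¹)) := by
          rw [hcdef, H.inv_mul_cancel_left]
      _ = ↑H⁻¹ * c₀ := by rw [e]
  -- the outer inverse property for c
  have houter : c * (a + δa) * c = c := by
    have e0 : c₀ * (a + δa) * c₀ = c₀ * (G : A) := by
      have e1 : c₀ * (a + δa) * c₀ = c₀ * a * c₀ + c₀ * (δa * c₀) := by noncomm_ring
      rw [e1, hc₀ac₀, hGval]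
      noncomm_ring
    calc c * (a + δa) * c = (↑H⁻¹ * c₀) * ((a + δa) * (c₀ * ↑G⁻¹)) := by
          rw [← hcH, ← hcdef]; noncomm_ring
      _ = ↑H⁻¹ * ((c₀ * (a + δa) * c₀) * ↑G⁻¹) := by noncomm_ring
      _ = ↑H⁻¹ * ((c₀ * (G : A)) * ↑G⁻¹) := by rw [e0]
      _ = ↑H⁻¹ * c₀ := by rw [Units.mul_inv_cancel_right]
      _ = c := hcH.symm
  -- ## range and kernel of c
  have hcp' : c = p' * (↑Np⁻¹ * b * ↑N'⁻¹ * (1 - q') * ↑G⁻¹) := by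
    rw [hcdef, hc₀def, hw'def, hb₁def, hwdef]; noncomm_ring
  have hp'c : p' = c * (↑G * (a * b₁ * (a * ((1 + (p' - p) * (b * a)) * (b * a * (p' * ↑Z⁻¹)))))) := by
    have e1 : c * ↑G = c₀ := by rw [hcdef]; exact Units.inv_mul_cancel_right _ _
    calc p' = b₁ * (a * ((1 + (p' - p) * (b * a)) * (b * a * (p' * ↑Z⁻¹)))) := hrange₁.symm
      _ = (c₀ * a * b₁) * (a * ((1 + (p' - p) * (b * a)) * (b * a * (p' * ↑Z⁻¹)))) := by
          rw [hc₀ab₁]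
      _ = (c * ↑G) * (a * b₁ * (a * ((1 + (p' - p) * (b * a)) * (b * a * (p' * ↑Z⁻¹))))) := by
          rw [e1]; noncomm_ring
      _ = c * (↑G * (a * b₁ * (a * ((1 + (p' - p) * (b * a)) * (b * a * (p' * ↑Z⁻¹)))))) := by
          rw [mul_assoc]
  have hrangec : Rr c = Rr p' := by
    ext x
    simp only [Rr, Set.mem_setOf_eq]
    constructor
    · rintro ⟨y, rfl⟩
      exact ⟨↑Np⁻¹ * b * ↑N'⁻¹ * (1 - q') * ↑G⁻¹ * y, by rw [hcp', mul_assoc]⟩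
    · rintro ⟨y, rfl⟩
      refine ⟨↑G * (a * b₁ * (a * ((1 + (p' - p) * (b * a)) * (b * a * (p' * ↑Z⁻¹))))) * y, ?_⟩
      conv_lhs => rw [hp'c]
      rw [mul_assoc]
  have hHc : (H : A) * c = c₀ := by
    rw [hcH, H.mul_inv_cancel_left]
  have hkernelc : Kr c = Rr q' := by
    ext x
    simp only [Kr, Rr, Set.mem_setOf_eq]
    constructor
    · intro hx
      have hc₀x : c₀ * x = 0 := by
        calc c₀ * x = (H : A) * (c * x) := by rw [← hHc, mul_assoc]
          _ = 0 := by rw [hx, mul_zero]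
      obtain ⟨y, hy⟩ := hkerc₀ x hc₀x
      exact ⟨y, hy⟩
    · rintro ⟨y, rfl⟩
      have hcq' : c * q' = 0 := by
        calc c * q' = ↑H⁻¹ * (c₀ * q') := by rw [hcH, mul_assoc]
          _ = 0 := by rw [hc₀q', mul_zero]
      rw [← mul_assoc, hcq', zero_mul]
  -- ## norm of c
  have hceq : c = c₀ - c * (δa * c₀) := by
    have e1 : (↑G⁻¹ : A) = 1 - ↑G⁻¹ * (δa * c₀) := by
      have e2 : (↑G⁻¹ : A) * (G : A) = 1 := G.inv_mul
      rw [hGval] at e2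
      calc (↑G⁻¹ : A) = ↑G⁻¹ * (1 + δa * c₀) - ↑G⁻¹ * (δa * c₀) := by noncomm_ring
        _ = 1 - ↑G⁻¹ * (δa * c₀) := by
            rw [show (↑G⁻¹ : A) * (1 + δa * c₀) = 1 from e2]
    calc c = c₀ * (↑G⁻¹ : A) := hcdef
      _ = c₀ * (1 - ↑G⁻¹ * (δa * c₀)) := by conv_lhs => rw [e1]
      _ = c₀ - (c₀ * ↑G⁻¹) * (δa * c₀) := by noncomm_ring
      _ = c₀ - c * (δa * c₀) := by rw [← hcdef]
  have hCn : ‖c‖ ≤ ‖c₀‖ + ‖c‖ * (DD * ‖c₀‖) := by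
    have h1 : ‖c * (δa * c₀)‖ ≤ ‖c‖ * (DD * ‖c₀‖) := by
      calc ‖c * (δa * c₀)‖ ≤ ‖c‖ * ‖δa * c₀‖ := norm_mul_le _ _
        _ ≤ ‖c‖ * (‖δa‖ * ‖c₀‖) := by
            apply mul_le_mul_of_nonneg_left (norm_mul_le _ _) (norm_nonneg c)
        _ = ‖c‖ * (DD * ‖c₀‖) := by rw [hDD]
    calc ‖c‖ = ‖c₀ - c * (δa * c₀)‖ := by conv_lhs => rw [hceq]
      _ ≤ ‖c₀‖ + ‖c * (δa * c₀)‖ := norm_sub_le _ _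
      _ ≤ ‖c₀‖ + ‖c‖ * (DD * ‖c₀‖) := by linarith
  have hCΔ₁ : ‖c‖ * ((1 - (1 + K) * EP - K * EQ) - (1 + EQ) * B * DD) ≤ (1 + EQ) * B :=
    stmt18aux_C K EP EQ B DD ‖c‖ ‖c₀‖ hC₀0 (norm_nonneg c) hDD0 hB0 hEQ0 hΔ₀ hC₀Δ hCn
  have hΔ₁ : (0:ℝ) < 1 - (1 + K) * EP - K * EQ - (1 + EQ) * B * DD := by nlinarith
  -- ## assembling the final bounds
  refine ⟨c, houter, hrangec, hkernelc, ?_, ?_⟩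
  · rw [le_div_iff₀ hΔ₁]
    calc ‖c‖ * (1 - (1 + K) * EP - K * EQ - (1 + EQ) * B * DD)
        = ‖c‖ * ((1 - (1 + K) * EP - K * EQ) - (1 + EQ) * B * DD) := by ring
      _ ≤ (1 + EQ) * B := hCΔ₁
  · -- ‖c - b‖ bound
    have hd₃e : c - c₀ = -(c * (δa * c₀)) := by
      conv_lhs => rw [hceq]
      noncomm_ring
    have hd₃n : ‖c - c₀‖ ≤ ‖c‖ * (DD * ‖c₀‖) := by
      rw [hd₃e, norm_neg]
      calc ‖c * (δa * c₀)‖ ≤ ‖c‖ * ‖δa * c₀‖ := norm_mul_le _ _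
        _ ≤ ‖c‖ * (‖δa‖ * ‖c₀‖) := by
            apply mul_le_mul_of_nonneg_left (norm_mul_le _ _) (norm_nonneg c)
        _ = ‖c‖ * (DD * ‖c₀‖) := by rw [hDD]
    have htri : ‖c - b‖ ≤ ‖b₁ - b‖ + ‖c₀ - b₁‖ + ‖c - c₀‖ := by
      calc ‖c - b‖ = ‖(b₁ - b) + (c₀ - b₁) + (c - c₀)‖ := by
            rw [show (b₁ - b) + (c₀ - b₁) + (c - c₀) = c - b by abel]
        _ ≤ ‖(b₁ - b) + (c₀ - b₁)‖ + ‖c - c₀‖ := norm_add_le _ _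
        _ ≤ ‖b₁ - b‖ + ‖c₀ - b₁‖ + ‖c - c₀‖ := by
            have := norm_add_le (b₁ - b) (c₀ - b₁)
            linarith
    have hd₁D : ‖b₁ - b‖ * (1 - K * EP) ≤ (1 + K) * EP * B :=
      stmt18aux_d1 K EP B ‖w‖ ‖b₁ - b‖ hD hKnn hEP0 hd₁n hWD
    have hT2 : (‖b₁ - b‖ + ‖c₀ - b₁‖) * (1 - (1 + K) * EP - K * EQ) ≤
        B * ((1 + K) * (EP + EQ)) :=
      stmt18aux_T2 K EP EQ B ‖b₁ - b‖ ‖c₀ - b₁‖ hK0 hEP0 hEQ0 hB0 (norm_nonneg _)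
        hD hG2 hΔ₀ hd₁D hd₂G2D
    have hpart1 : ‖b₁ - b‖ + ‖c₀ - b₁‖ ≤ B / (1 - (1 + K) * EP - K * EQ) * ((1 + K) * (EP + EQ)) := by
      rw [div_mul_eq_mul_div, le_div_iff₀ hΔ₀]
      calc (‖b₁ - b‖ + ‖c₀ - b₁‖) * (1 - (1 + K) * EP - K * EQ) ≤ B * ((1 + K) * (EP + EQ)) := hT2
        _ = B * ((1 + K) * (EP + EQ)) := rfl
    have hpart2 : ‖c - c₀‖ ≤ B / (1 - (1 + K) * EP - K * EQ) *
        ((1 + EQ) ^ 2 * DD * B / (1 - (1 + K) * EP - K * EQ - (1 + EQ) * B * DD)) := by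
      have hrhs : B / (1 - (1 + K) * EP - K * EQ) *
          ((1 + EQ) ^ 2 * DD * B / (1 - (1 + K) * EP - K * EQ - (1 + EQ) * B * DD)) =
          B * ((1 + EQ) ^ 2 * DD * B) /
            ((1 - (1 + K) * EP - K * EQ) * (1 - (1 + K) * EP - K * EQ - (1 + EQ) * B * DD)) := by
        field_simp
      rw [hrhs, le_div_iff₀ (by positivity)]
      -- ‖c-c₀‖ * (Δ₀ * Δ₁) ≤ B * ((1+EQ)^2 * DD * B)
      have k1 : ‖c - c₀‖ * ((1 - (1 + K) * EP - K * EQ) *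
          (1 - (1 + K) * EP - K * EQ - (1 + EQ) * B * DD)) ≤
          (‖c‖ * (DD * ‖c₀‖)) * ((1 - (1 + K) * EP - K * EQ) *
          (1 - (1 + K) * EP - K * EQ - (1 + EQ) * B * DD)) :=
        mul_le_mul_of_nonneg_right hd₃n (by positivity)
      have k2 : (‖c‖ * (1 - (1 + K) * EP - K * EQ - (1 + EQ) * B * DD)) *
          (DD * (‖c₀‖ * (1 - (1 + K) * EP - K * EQ))) ≤
          ((1 + EQ) * B) * (DD * ((1 + EQ) * B)) := by
        apply mul_le_mul
        · calc ‖c‖ * (1 - (1 + K) * EP - K * EQ - (1 + EQ) * B * DD)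
              = ‖c‖ * ((1 - (1 + K) * EP - K * EQ) - (1 + EQ) * B * DD) := by ring
            _ ≤ (1 + EQ) * B := hCΔ₁
        · exact mul_le_mul_of_nonneg_left hC₀Δ hDD0
        · positivity
        · positivity
      calc ‖c - c₀‖ * ((1 - (1 + K) * EP - K * EQ) *
            (1 - (1 + K) * EP - K * EQ - (1 + EQ) * B * DD))
          ≤ (‖c‖ * (DD * ‖c₀‖)) * ((1 - (1 + K) * EP - K * EQ) *
            (1 - (1 + K) * EP - K * EQ - (1 + EQ) * B * DD)) := k1
        _ = (‖c‖ * (1 - (1 + K) * EP - K * EQ - (1 + EQ) * B * DD)) *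
            (DD * (‖c₀‖ * (1 - (1 + K) * EP - K * EQ))) := by ring
        _ ≤ ((1 + EQ) * B) * (DD * ((1 + EQ) * B)) := k2
        _ = B * ((1 + EQ) ^ 2 * DD * B) := by ring
    calc ‖c - b‖ ≤ (‖b₁ - b‖ + ‖c₀ - b₁‖) + ‖c - c₀‖ := by linarith
      _ ≤ B / (1 - (1 + K) * EP - K * EQ) * ((1 + K) * (EP + EQ)) +
          B / (1 - (1 + K) * EP - K * EQ) *
            ((1 + EQ) ^ 2 * DD * B / (1 - (1 + K) * EP - K * EQ - (1 + EQ) * B * DD)) := by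
        exact add_le_add hpart1 hpart2
      _ = B / (1 - (1 + K) * EP - K * EQ) *
          ((1 + K) * (EP + EQ) +
            (1 + EQ) ^ 2 * DD * B / (1 - (1 + K) * EP - K * EQ - (1 + EQ) * B * DD)) := by
        ring
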